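/- Let q be an odd prime power, κ ∈ F_{q^2}, λ ∈ F_{q^2}, t ∈ F_q. Then A_t^λ = {(a, a^{q+1}t + Tr(λa + κλa^q + (1/2)λ^q a^2), at + λa^q) : a ∈ F_{q^2}} is a subgroup of the Heisenberg group E of order q^2. -/

import Mathlib

open Polynomial

namespace BEL

variable {F : Type*} [Field F]

/-- The relative trace map `x ↦ x + x^q` from `F_{q^2}` to `F_q`. -/
def tr (q : ℕ) (x : F) : F := x + x ^ q

/-- The Heisenberg group operation on `F_{q^2} × F_q × F_{q^2}`
(the middle coordinate is carried inside the big field). -/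
def hmul (q : ℕ) (x y : F × F × F) : F × F × F :=
  (x.1 + y.1, x.2.1 + y.2.1 + tr q (x.2.2 ^ q * y.1), x.2.2 + y.2.2)

/-- The underlying set `F_{q^2} × F_q × F_{q^2}`: triples whose middle coordinate
lies in the subfield `F_q` (fixed points of `x ↦ x^q`). -/
def carrier (q : ℕ) : Set (F × F × F) := {x | x.2.1 ^ q = x.2.1}

/-- The subgroup `A_t = {(a, a^{q+1} t, a t) : a ∈ F_{q^2}}`. -/
def A (q : ℕ) (t : F) : Set (F × F × F) := {x | ∃ a : F, x = (a, a ^ (q + 1) * t, a * t)}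

/-- The subgroup `A*_t = {(a, γ, a t) : a ∈ F_{q^2}, γ ∈ F_q}`. -/
def Astar (q : ℕ) (t : F) : Set (F × F × F) :=
  {x | ∃ a γ : F, γ ^ q = γ ∧ x = (a, γ, a * t)}

/-- The subgroup `A_∞ = {(0, 0, a) : a ∈ F_{q^2}}`. -/
def Ainf : Set (F × F × F) := {x | ∃ a : F, x = (0, 0, a)}

/-- The subgroup `A*_∞ = {(0, γ, a) : γ ∈ F_q, a ∈ F_{q^2}}`. -/
def Astarinf (q : ℕ) : Set (F × F × F) := {x | ∃ γ a : F, γ ^ q = γ ∧ x = (0, γ, a)}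

/-- The family `A_i` indexed by `F_q ∪ {∞}` (`none` is `∞`). -/
def Afam (q : ℕ) : Option F → Set (F × F × F)
  | none => Ainf
  | some t => A q t

/-- The family `A*_i` indexed by `F_q ∪ {∞}` (`none` is `∞`). -/
def Astarfam (q : ℕ) : Option F → Set (F × F × F)
  | none => Astarinf q
  | some t => Astar q t

/-- The map `τ_λ` (depending also on `κ`), written out explicitly on triples. -/
def tau (q : ℕ) (κ lam : F) (x : F × F × F) : F × F × F :=
  (x.1,
    tr q (lam * x.1 + κ * lam * x.1 ^ q + (2 : F)⁻¹ * lam ^ q * x.1 ^ 2) + x.2.1,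
    lam * x.1 ^ q + x.2.2)

/-- The subgroup `A_t^λ`. -/
def Alam (q : ℕ) (κ lam t : F) : Set (F × F × F) :=
  {x | ∃ a : F,
    x = (a,
      a ^ (q + 1) * t + tr q (lam * a + κ * lam * a ^ q + (2 : F)⁻¹ * lam ^ q * a ^ 2),
      a * t + lam * a ^ q)}

/-- Auxiliary: the parametrization of `A_t^λ`. -/
def elem (q : ℕ) (κ lam t : F) (a : F) : F × F × F :=
  (a, a ^ (q + 1) * t + tr q (lam * a + κ * lam * a ^ q + (2 : F)⁻¹ * lam ^ q * a ^ 2),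
   a * t + lam * a ^ q)

lemma Alam_eq_range (q : ℕ) (κ lam t : F) :
    Alam q κ lam t = Set.range (elem q κ lam t) := by
  ext x
  simp [Alam, elem, Set.range, eq_comm]

lemma sq_pow (x : F) (q : ℕ) : (x ^ 2) ^ q = (x ^ q) ^ 2 := by
  rw [← pow_mul, mul_comm, pow_mul]

lemma hmul_elem (q : ℕ) (κ lam t : F)
    (hadd : ∀ x y : F, (x + y) ^ q = x ^ q + y ^ q)
    (hq2 : ∀ x : F, (x ^ q) ^ q = x)
    (hhalf : ((2 : F)⁻¹) ^ q = (2 : F)⁻¹)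
    (h2 : (2 : F) * (2 : F)⁻¹ = 1)
    (ht : t ^ q = t) (a b : F) :
    hmul q (elem q κ lam t a) (elem q κ lam t b) = elem q κ lam t (a + b) := by
  have epow : ∀ x : F, (x * t + lam * x ^ q) ^ q = x ^ q * t + lam ^ q * x := by
    intro x
    rw [hadd, mul_pow, mul_pow, hq2, ht]
  have trexp : ∀ x : F, tr q (lam * x + κ * lam * x ^ q + (2 : F)⁻¹ * lam ^ q * x ^ 2)
      = lam * x + κ * lam * x ^ q + (2 : F)⁻¹ * lam ^ q * x ^ 2
        + (lam ^ q * x ^ q + κ ^ q * lam ^ q * x + (2 : F)⁻¹ * lam * (x ^ q) ^ 2) := by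
    intro x
    rw [tr, hadd, hadd, mul_pow, mul_pow, mul_pow, mul_pow, mul_pow, hq2, hhalf, sq_pow,
      hq2]
  have trlast : tr q ((a * t + lam * a ^ q) ^ q * b)
      = (a ^ q * t + lam ^ q * a) * b + (a * t + lam * a ^ q) * b ^ q := by
    rw [epow a, tr, mul_pow, hadd, mul_pow, mul_pow, hq2, hq2, ht]
  unfold hmul elem
  refine Prod.ext rfl (Prod.ext ?_ ?_) <;> simp only
  · rw [trlast, trexp a, trexp b, trexp (a + b)]
    simp only [pow_succ]
    simp only [hadd]
    linear_combination (-(lam ^ q * a * b + lam * a ^ q * b ^ q)) * h2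
  · rw [hadd]
    ring

lemma elem_zero (q : ℕ) (κ lam t : F) (hq0 : 0 < q) :
    elem q κ lam t 0 = (0, 0, 0) := by
  simp [elem, tr, zero_pow hq0.ne', zero_pow (Nat.succ_ne_zero q)]

theorem Alam_subgroup_of_order_q_sq (p n q : ℕ) (hp : p.Prime) (hn : 0 < n)
    (hq : q = p ^ n) (hodd : Odd q)
    (F : Type*) [Field F] [Fintype F] (hF : Fintype.card F = q ^ 2)
    (κ lam t : F) (ht : t ^ q = t) :
    Alam q κ lam t ⊆ carrier q ∧
    (0, 0, 0) ∈ Alam (F := F) q κ lam t ∧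
    (∀ x y : F × F × F, x ∈ Alam q κ lam t → y ∈ Alam q κ lam t →
      hmul q x y ∈ Alam q κ lam t) ∧
    (∀ x ∈ Alam (F := F) q κ lam t, ∃ y ∈ Alam (F := F) q κ lam t,
      hmul q x y = (0, 0, 0) ∧ hmul q y x = (0, 0, 0)) ∧
    Nat.card (Alam (F := F) q κ lam t) = q ^ 2 := by
  haveI hpf : Fact p.Prime := ⟨hp⟩
  have hq0 : 0 < q := hq ▸ pow_pos hp.pos n
  have hcharP : CharP F p := by
    have h2 : (ringChar F).Prime := CharP.char_is_prime F (ringChar F)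
    have h3 : p ∣ ringChar F := by
      rw [prime_dvd_char_iff_dvd_card, hF, hq]
      exact dvd_pow (dvd_pow_self p hn.ne') (by norm_num)
    have : p = ringChar F := (Nat.prime_dvd_prime_iff_eq hp h2).mp h3
    rw [this]; exact ringChar.charP F
  haveI := hcharP
  have hadd : ∀ x y : F, (x + y) ^ q = x ^ q + y ^ q := by
    subst hq; intro x y; exact add_pow_char_pow x y p n
  have hq2 : ∀ x : F, (x ^ q) ^ q = x := by
    intro x
    have := FiniteField.pow_card x
    rw [hF, show q ^ 2 = q * q by ring, pow_mul] at this
    exact this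
  have hp2 : p ≠ 2 := by
    rintro rfl
    rw [hq] at hodd
    exact (Nat.not_odd_iff_even.mpr (Nat.even_pow.mpr ⟨even_two, hn.ne'⟩)) hodd
  have h2ne : (2 : F) ≠ 0 := by
    intro h
    have hdvd : p ∣ 2 := (CharP.cast_eq_zero_iff F p 2).mp (by exact_mod_cast h)
    exact hp2 ((Nat.prime_dvd_prime_iff_eq hp Nat.prime_two).mp hdvd)
  have h2 : (2 : F) * (2 : F)⁻¹ = 1 := mul_inv_cancel₀ h2ne
  have hhalf : ((2 : F)⁻¹) ^ q = (2 : F)⁻¹ := by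
    have htwo : (2 : F) ^ q = 2 := by
      have := hadd 1 1
      simpa [one_add_one_eq_two] using this
    rw [inv_pow, htwo]
  have hmem : ∀ a : F, elem q κ lam t a ∈ Alam q κ lam t := by
    intro a
    exact ⟨a, rfl⟩
  have hme := hmul_elem q κ lam t hadd hq2 hhalf h2 ht
  refine ⟨?_, ?_, ?_, ?_, ?_⟩
  · rintro x ⟨a, rfl⟩
    show (_ : F) ^ q = _
    rw [tr, hadd, mul_pow]
    rw [show (a ^ (q + 1)) ^ q = a ^ (q + 1) by rw [pow_succ, mul_pow, hq2]; ring, ht]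
    rw [hadd]
    rw [show ((lam * a + κ * lam * a ^ q + (2 : F)⁻¹ * lam ^ q * a ^ 2) ^ q) ^ q
      = lam * a + κ * lam * a ^ q + (2 : F)⁻¹ * lam ^ q * a ^ 2 from hq2 _]
    ring
  · have := elem_zero (F := F) q κ lam t hq0
    rw [← this]; exact hmem 0
  · rintro x y ⟨a, rfl⟩ ⟨b, rfl⟩
    rw [show ((a : F), a ^ (q + 1) * t + tr q (lam * a + κ * lam * a ^ q
        + (2 : F)⁻¹ * lam ^ q * a ^ 2), a * t + lam * a ^ q) = elem q κ lam t a from rfl,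
      show ((b : F), b ^ (q + 1) * t + tr q (lam * b + κ * lam * b ^ q
        + (2 : F)⁻¹ * lam ^ q * b ^ 2), b * t + lam * b ^ q) = elem q κ lam t b from rfl,
      hme]
    exact hmem _
  · rintro x ⟨a, rfl⟩
    refine ⟨elem q κ lam t (-a), hmem _, ?_, ?_⟩
    · rw [show ((a : F), a ^ (q + 1) * t + tr q (lam * a + κ * lam * a ^ q
        + (2 : F)⁻¹ * lam ^ q * a ^ 2), a * t + lam * a ^ q) = elem q κ lam t a from rfl,
        hme, add_neg_cancel, elem_zero q κ lam t hq0]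
    · rw [show ((a : F), a ^ (q + 1) * t + tr q (lam * a + κ * lam * a ^ q
        + (2 : F)⁻¹ * lam ^ q * a ^ 2), a * t + lam * a ^ q) = elem q κ lam t a from rfl,
        hme, neg_add_cancel, elem_zero q κ lam t hq0]
  · rw [Alam_eq_range, Nat.card_range_of_injective (f := elem q κ lam t)
      (fun a b h => congrArg Prod.fst h), Nat.card_eq_fintype_card, hF]

end BEL
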